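/- Let k be a non-zero real number, U a twice differentiable function, and V a twice differentiable function on ℝ² ∖ {0} with V(r cos φ, r sin φ) = r^k U(φ) for all r > 0, φ ∈ ℝ. Suppose c > 0 and φ₀ ∈ ℝ are such that the point c⃗ = (c cos φ₀, c sin φ₀) is a Darboux point of V, i.e., ∇V(c⃗) = c⃗, and that U′(φ₀) = 0 and U(φ₀) ≠ 0. Then the eigenvalue λ := (∂²V/∂q₁² + ∂²V/∂q₂²)(c⃗) − (k−1) of the Hessian V″(c⃗) satisfies λ = 1 + U″(φ₀)/( k U(φ₀) ). -/

import Mathlib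

/-- Partial derivative with respect to the first Cartesian coordinate. -/
noncomputable def d1 (V : ℝ × ℝ → ℝ) (q : ℝ × ℝ) : ℝ :=
  deriv (fun s => V (s, q.2)) q.1

/-- Partial derivative with respect to the second Cartesian coordinate. -/
noncomputable def d2 (V : ℝ × ℝ → ℝ) (q : ℝ × ℝ) : ℝ :=
  deriv (fun s => V (q.1, s)) q.2

/-- Second partial derivative with respect to the first Cartesian coordinate. -/
noncomputable def d11 (V : ℝ × ℝ → ℝ) (q : ℝ × ℝ) : ℝ :=
  deriv (deriv (fun s => V (s, q.2))) q.1

/-- Second partial derivative with respect to the second Cartesian coordinate. -/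
noncomputable def d22 (V : ℝ × ℝ → ℝ) (q : ℝ × ℝ) : ℝ :=
  deriv (deriv (fun s => V (q.1, s))) q.2

set_option maxHeartbeats 1000000 in
/-- For `V(r cos φ, r sin φ) = r^k U(φ)` (`k ≠ 0`), if
`c⃗ = (c cos φ₀, c sin φ₀)` with `c > 0` is a Darboux point of `V` (`∇V(c⃗) = c⃗`),
`U'(φ₀) = 0` and `U(φ₀) ≠ 0`, then the eigenvalue
`λ = ΔV(c⃗) - (k-1)` of the Hessian satisfies `λ = 1 + U''(φ₀)/(k U(φ₀))`. -/
theorem darboux_point_lambda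
    (k : ℝ) (hk : k ≠ 0) (U : ℝ → ℝ) (hU : ContDiff ℝ 2 U)
    (V : ℝ × ℝ → ℝ) (hV : ContDiffOn ℝ 2 V {q : ℝ × ℝ | q ≠ 0})
    (hpolar : ∀ r : ℝ, 0 < r → ∀ φ : ℝ,
      V (r * Real.cos φ, r * Real.sin φ) = r ^ k * U φ)
    (c φ₀ : ℝ) (hc : 0 < c)
    (hdarboux1 : d1 V (c * Real.cos φ₀, c * Real.sin φ₀) = c * Real.cos φ₀)
    (hdarboux2 : d2 V (c * Real.cos φ₀, c * Real.sin φ₀) = c * Real.sin φ₀)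
    (hcrit : deriv U φ₀ = 0) (hU0 : U φ₀ ≠ 0) :
    d11 V (c * Real.cos φ₀, c * Real.sin φ₀)
      + d22 V (c * Real.cos φ₀, c * Real.sin φ₀) - (k - 1)
      = 1 + deriv (deriv U) φ₀ / (k * U φ₀) := by
  have pyth : Real.cos φ₀ ^ 2 + Real.sin φ₀ ^ 2 = 1 := by
    have := Real.sin_sq_add_cos_sq φ₀; linarith
  set p : ℝ × ℝ := (c * Real.cos φ₀, c * Real.sin φ₀) with hpdef
  have hp : p ≠ 0 := by
    intro h
    have h1 : c * Real.cos φ₀ = 0 := congrArg Prod.fst h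
    have h2 : c * Real.sin φ₀ = 0 := congrArg Prod.snd h
    have h3 : c ^ 2 = 0 := by
      linear_combination (c * Real.cos φ₀) * h1 + (c * Real.sin φ₀) * h2 - c ^ 2 * pyth
    nlinarith
  have hopen : IsOpen {q : ℝ × ℝ | q ≠ 0} := isOpen_ne
  have hCA : ∀ q : ℝ × ℝ, q ≠ 0 → ContDiffAt ℝ 2 V q := fun q hq =>
    hV.contDiffAt (hopen.mem_nhds hq)
  have hdiff : ∀ q : ℝ × ℝ, q ≠ 0 → DifferentiableAt ℝ V q := fun q hq =>
    (hCA q hq).differentiableAt (by norm_num)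
  set H := fderiv ℝ (fderiv ℝ V) p with hHdef
  have hH : HasFDerivAt (fderiv ℝ V) H p :=
    (((hCA p hp).fderiv_right (m := 1) (by norm_num)).differentiableAt (by norm_num)).hasFDerivAt
  -- directional first derivatives
  have hD1 : ∀ q : ℝ × ℝ, q ≠ 0 →
      HasDerivAt (fun s => V (s, q.2)) (fderiv ℝ V q ((1 : ℝ), (0 : ℝ))) q.1 := by
    intro q hq
    have hι : HasDerivAt (fun s : ℝ => ((s, q.2) : ℝ × ℝ)) ((1 : ℝ), (0 : ℝ)) q.1 :=
      HasDerivAt.prodMk (hasDerivAt_id q.1) (hasDerivAt_const q.1 q.2)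
    simpa [Function.comp_def] using
      HasFDerivAt.comp_hasDerivAt q.1 ((hdiff q hq).hasFDerivAt) hι
  have hD2 : ∀ q : ℝ × ℝ, q ≠ 0 →
      HasDerivAt (fun s => V (q.1, s)) (fderiv ℝ V q ((0 : ℝ), (1 : ℝ))) q.2 := by
    intro q hq
    have hι : HasDerivAt (fun s : ℝ => ((q.1, s) : ℝ × ℝ)) ((0 : ℝ), (1 : ℝ)) q.2 :=
      HasDerivAt.prodMk (hasDerivAt_const q.2 q.1) (hasDerivAt_id q.2)
    simpa [Function.comp_def] using
      HasFDerivAt.comp_hasDerivAt q.2 ((hdiff q hq).hasFDerivAt) hι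
  have hfp1 : fderiv ℝ V p ((1 : ℝ), (0 : ℝ)) = c * Real.cos φ₀ := by
    rw [← hdarboux1]; exact ((hD1 p hp).deriv).symm
  have hfp2 : fderiv ℝ V p ((0 : ℝ), (1 : ℝ)) = c * Real.sin φ₀ := by
    rw [← hdarboux2]; exact ((hD2 p hp).deriv).symm
  have hfp : ∀ v : ℝ × ℝ, fderiv ℝ V p v
      = v.1 * (c * Real.cos φ₀) + v.2 * (c * Real.sin φ₀) := by
    intro v
    have hv : v = v.1 • ((1 : ℝ), (0 : ℝ)) + v.2 • ((0 : ℝ), (1 : ℝ)) := by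
      ext <;> simp
    conv_lhs => rw [hv]
    rw [map_add, map_smul, map_smul, hfp1, hfp2, smul_eq_mul, smul_eq_mul]
  -- d11 and d22 via the second derivative H
  have hd11 : d11 V p = H ((1 : ℝ), (0 : ℝ)) ((1 : ℝ), (0 : ℝ)) := by
    have hev : ∀ᶠ s in nhds p.1, ((s, p.2) : ℝ × ℝ) ≠ 0 := by
      have hco : Continuous fun s : ℝ => ((s, p.2) : ℝ × ℝ) :=
        continuous_id.prodMk continuous_const
      have hmem : p.1 ∈ (fun s : ℝ => ((s, p.2) : ℝ × ℝ)) ⁻¹' {q : ℝ × ℝ | q ≠ 0} := by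
        simp only [Set.mem_preimage, Set.mem_setOf_eq, Prod.mk.eta]; exact hp
      filter_upwards [(hopen.preimage hco).eventually_mem hmem] with s hs
      exact hs
    have hE : (fun s => fderiv ℝ V (s, p.2) ((1 : ℝ), (0 : ℝ)))
        =ᶠ[nhds p.1] deriv (fun s => V (s, p.2)) := by
      filter_upwards [hev] with s hs
      exact ((hD1 (s, p.2) hs).deriv).symm
    have hC : HasDerivAt (fun s => fderiv ℝ V (s, p.2)) (H ((1 : ℝ), (0 : ℝ))) p.1 := by
      have hι : HasDerivAt (fun s : ℝ => ((s, p.2) : ℝ × ℝ)) ((1 : ℝ), (0 : ℝ)) p.1 :=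
        HasDerivAt.prodMk (hasDerivAt_id p.1) (hasDerivAt_const p.1 p.2)
      simpa [Function.comp_def] using hH.comp_hasDerivAt p.1 hι
    have hd : HasDerivAt (fun s => fderiv ℝ V (s, p.2) ((1 : ℝ), (0 : ℝ)))
        (H ((1 : ℝ), (0 : ℝ)) ((1 : ℝ), (0 : ℝ))) p.1 := by
      simpa using hC.clm_apply (hasDerivAt_const p.1 ((1 : ℝ), (0 : ℝ)))
    calc d11 V p = deriv (deriv (fun s => V (s, p.2))) p.1 := rfl
      _ = deriv (fun s => fderiv ℝ V (s, p.2) ((1 : ℝ), (0 : ℝ))) p.1 := (hE.deriv_eq).symm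
      _ = H ((1 : ℝ), (0 : ℝ)) ((1 : ℝ), (0 : ℝ)) := hd.deriv
  have hd22 : d22 V p = H ((0 : ℝ), (1 : ℝ)) ((0 : ℝ), (1 : ℝ)) := by
    have hev : ∀ᶠ s in nhds p.2, ((p.1, s) : ℝ × ℝ) ≠ 0 := by
      have hco : Continuous fun s : ℝ => ((p.1, s) : ℝ × ℝ) :=
        continuous_const.prodMk continuous_id
      have hmem : p.2 ∈ (fun s : ℝ => ((p.1, s) : ℝ × ℝ)) ⁻¹' {q : ℝ × ℝ | q ≠ 0} := by
        simp only [Set.mem_preimage, Set.mem_setOf_eq, Prod.mk.eta]; exact hp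
      filter_upwards [(hopen.preimage hco).eventually_mem hmem] with s hs
      exact hs
    have hE : (fun s => fderiv ℝ V (p.1, s) ((0 : ℝ), (1 : ℝ)))
        =ᶠ[nhds p.2] deriv (fun s => V (p.1, s)) := by
      filter_upwards [hev] with s hs
      exact ((hD2 (p.1, s) hs).deriv).symm
    have hC : HasDerivAt (fun s => fderiv ℝ V (p.1, s)) (H ((0 : ℝ), (1 : ℝ))) p.2 := by
      have hι : HasDerivAt (fun s : ℝ => ((p.1, s) : ℝ × ℝ)) ((0 : ℝ), (1 : ℝ)) p.2 :=
        HasDerivAt.prodMk (hasDerivAt_const p.2 p.1) (hasDerivAt_id p.2)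
      simpa [Function.comp_def] using hH.comp_hasDerivAt p.2 hι
    have hd : HasDerivAt (fun s => fderiv ℝ V (p.1, s) ((0 : ℝ), (1 : ℝ)))
        (H ((0 : ℝ), (1 : ℝ)) ((0 : ℝ), (1 : ℝ))) p.2 := by
      simpa using hC.clm_apply (hasDerivAt_const p.2 ((0 : ℝ), (1 : ℝ)))
    calc d22 V p = deriv (deriv (fun s => V (p.1, s))) p.2 := rfl
      _ = deriv (fun s => fderiv ℝ V (p.1, s) ((0 : ℝ), (1 : ℝ))) p.2 := (hE.deriv_eq).symm
      _ = H ((0 : ℝ), (1 : ℝ)) ((0 : ℝ), (1 : ℝ)) := hd.deriv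
  ----------------------------------------------------------------
  -- radial direction
  have hγr : ∀ r : ℝ, HasDerivAt
      (fun t : ℝ => ((t * Real.cos φ₀, t * Real.sin φ₀) : ℝ × ℝ))
      ((Real.cos φ₀, Real.sin φ₀)) r := fun r =>
    HasDerivAt.prodMk (hasDerivAt_mul_const _) (hasDerivAt_mul_const _)
  have hγrne : ∀ r : ℝ, 0 < r → ((r * Real.cos φ₀, r * Real.sin φ₀) : ℝ × ℝ) ≠ 0 := by
    intro r hr h
    have h1 : r * Real.cos φ₀ = 0 := congrArg Prod.fst h
    have h2 : r * Real.sin φ₀ = 0 := congrArg Prod.snd h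
    have h3 : r ^ 2 = 0 := by
      linear_combination (r * Real.cos φ₀) * h1 + (r * Real.sin φ₀) * h2 - r ^ 2 * pyth
    nlinarith
  have hRd : ∀ r : ℝ, 0 < r → HasDerivAt (fun t => V (t * Real.cos φ₀, t * Real.sin φ₀))
      (fderiv ℝ V (r * Real.cos φ₀, r * Real.sin φ₀) ((Real.cos φ₀, Real.sin φ₀))) r := by
    intro r hr
    simpa [Function.comp_def] using
      HasFDerivAt.comp_hasDerivAt r ((hdiff _ (hγrne r hr)).hasFDerivAt) (hγr r)
  have hevc : ∀ᶠ r in nhds c, (0 : ℝ) < r := eventually_gt_nhds hc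
  have hRev : deriv (fun t => V (t * Real.cos φ₀, t * Real.sin φ₀))
      =ᶠ[nhds c] fun r => k * r ^ (k - 1) * U φ₀ := by
    filter_upwards [hevc] with r hr
    have h1 : (fun t => V (t * Real.cos φ₀, t * Real.sin φ₀))
        =ᶠ[nhds r] fun t => t ^ k * U φ₀ := by
      filter_upwards [eventually_gt_nhds hr] with t ht
      exact hpolar t ht φ₀
    rw [h1.deriv_eq]
    exact ((Real.hasDerivAt_rpow_const (Or.inl hr.ne')).mul_const _).deriv
  have hRev2 : deriv (fun t => V (t * Real.cos φ₀, t * Real.sin φ₀))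
      =ᶠ[nhds c] fun r =>
        fderiv ℝ V (r * Real.cos φ₀, r * Real.sin φ₀) ((Real.cos φ₀, Real.sin φ₀)) := by
    filter_upwards [hevc] with r hr
    exact (hRd r hr).deriv
  have hA : k * c ^ (k - 1) * U φ₀ = c := by
    have h1 := (hRev2.symm.trans hRev).eq_of_nhds
    have h2 := hfp ((Real.cos φ₀, Real.sin φ₀))
    rw [← hpdef] at h1
    rw [h2] at h1
    simp only at h1
    nlinarith [pyth, h1]
  have hC2 : HasDerivAt (fun r => fderiv ℝ V (r * Real.cos φ₀, r * Real.sin φ₀))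
      (H ((Real.cos φ₀, Real.sin φ₀))) c := by
    simpa [Function.comp_def] using hH.comp_hasDerivAt c (hγr c)
  have hDee : HasDerivAt
      (fun r => fderiv ℝ V (r * Real.cos φ₀, r * Real.sin φ₀) ((Real.cos φ₀, Real.sin φ₀)))
      (H ((Real.cos φ₀, Real.sin φ₀)) ((Real.cos φ₀, Real.sin φ₀))) c := by
    simpa using hC2.clm_apply (hasDerivAt_const c ((Real.cos φ₀, Real.sin φ₀)))
  have hB : H ((Real.cos φ₀, Real.sin φ₀)) ((Real.cos φ₀, Real.sin φ₀))
      = k * ((k - 1) * c ^ (k - 1 - 1)) * U φ₀ := by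
    have hg : HasDerivAt (fun r : ℝ => k * r ^ (k - 1) * U φ₀)
        (k * ((k - 1) * c ^ (k - 1 - 1)) * U φ₀) c :=
      ((Real.hasDerivAt_rpow_const (Or.inl hc.ne')).const_mul k).mul_const _
    have h := hDee.deriv
    rw [(hRev2.symm.trans hRev).deriv_eq, hg.deriv] at h
    exact h.symm
  ----------------------------------------------------------------
  -- angular direction
  have hγa : ∀ φ : ℝ, HasDerivAt
      (fun ψ : ℝ => ((c * Real.cos ψ, c * Real.sin ψ) : ℝ × ℝ))
      ((-(c * Real.sin φ), c * Real.cos φ)) φ := by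
    intro φ
    have h1 : HasDerivAt (fun ψ => c * Real.cos ψ) (-(c * Real.sin φ)) φ := by
      simpa [mul_neg] using (Real.hasDerivAt_cos φ).const_mul c
    have h2 : HasDerivAt (fun ψ => c * Real.sin ψ) (c * Real.cos φ) φ :=
      (Real.hasDerivAt_sin φ).const_mul c
    exact HasDerivAt.prodMk h1 h2
  have hγane : ∀ φ : ℝ, ((c * Real.cos φ, c * Real.sin φ) : ℝ × ℝ) ≠ 0 := by
    intro φ h
    have h1 : c * Real.cos φ = 0 := congrArg Prod.fst h
    have h2 : c * Real.sin φ = 0 := congrArg Prod.snd h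
    have hsq : Real.cos φ ^ 2 + Real.sin φ ^ 2 = 1 := by
      have := Real.sin_sq_add_cos_sq φ; linarith
    have h3 : c ^ 2 = 0 := by
      linear_combination (c * Real.cos φ) * h1 + (c * Real.sin φ) * h2 - c ^ 2 * hsq
    nlinarith
  have hAev : ∀ φ : ℝ, deriv (fun ψ => V (c * Real.cos ψ, c * Real.sin ψ)) φ
      = fderiv ℝ V (c * Real.cos φ, c * Real.sin φ) ((-(c * Real.sin φ), c * Real.cos φ)) := by
    intro φ
    have := HasFDerivAt.comp_hasDerivAt φ ((hdiff _ (hγane φ)).hasFDerivAt) (hγa φ)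
    simpa [Function.comp_def] using this.deriv
  have hAfun : (fun φ => V (c * Real.cos φ, c * Real.sin φ)) = fun φ => c ^ k * U φ :=
    funext fun φ => hpolar c hc φ
  have hkey : (fun φ => fderiv ℝ V (c * Real.cos φ, c * Real.sin φ)
        ((-(c * Real.sin φ), c * Real.cos φ)))
      = fun φ => c ^ k * deriv U φ := by
    funext φ
    rw [← hAev φ, hAfun, deriv_const_mul_field]
  have hCw : HasDerivAt (fun φ => fderiv ℝ V (c * Real.cos φ, c * Real.sin φ))
      (H ((-(c * Real.sin φ₀), c * Real.cos φ₀))) φ₀ := by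
    simpa [Function.comp_def] using hH.comp_hasDerivAt φ₀ (hγa φ₀)
  have hw' : HasDerivAt (fun φ => ((-(c * Real.sin φ), c * Real.cos φ) : ℝ × ℝ))
      ((-(c * Real.cos φ₀), -(c * Real.sin φ₀))) φ₀ := by
    have h1 : HasDerivAt (fun φ => -(c * Real.sin φ)) (-(c * Real.cos φ₀)) φ₀ :=
      ((Real.hasDerivAt_sin φ₀).const_mul c).neg
    have h2 : HasDerivAt (fun φ => c * Real.cos φ) (-(c * Real.sin φ₀)) φ₀ := by
      simpa [mul_neg] using (Real.hasDerivAt_cos φ₀).const_mul c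
    exact HasDerivAt.prodMk h1 h2
  have hDww : HasDerivAt
      (fun φ => fderiv ℝ V (c * Real.cos φ, c * Real.sin φ)
        ((-(c * Real.sin φ), c * Real.cos φ)))
      (H ((-(c * Real.sin φ₀), c * Real.cos φ₀)) ((-(c * Real.sin φ₀), c * Real.cos φ₀))
        + fderiv ℝ V p ((-(c * Real.cos φ₀), -(c * Real.sin φ₀)))) φ₀ :=
    hCw.clm_apply hw'
  have hCeq : H ((-(c * Real.sin φ₀), c * Real.cos φ₀)) ((-(c * Real.sin φ₀), c * Real.cos φ₀))
      + fderiv ℝ V p ((-(c * Real.cos φ₀), -(c * Real.sin φ₀)))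
      = c ^ k * deriv (deriv U) φ₀ := by
    have h := hDww.deriv
    rw [hkey, deriv_const_mul_field] at h
    exact h.symm
  ----------------------------------------------------------------
  -- bilinear expansion
  have hexp : ∀ x y : ℝ, H ((x, y)) ((x, y))
      = x * x * H ((1 : ℝ), (0 : ℝ)) ((1 : ℝ), (0 : ℝ))
        + x * y * H ((1 : ℝ), (0 : ℝ)) ((0 : ℝ), (1 : ℝ))
        + y * x * H ((0 : ℝ), (1 : ℝ)) ((1 : ℝ), (0 : ℝ))
        + y * y * H ((0 : ℝ), (1 : ℝ)) ((0 : ℝ), (1 : ℝ)) := by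
    intro x y
    have hv : ((x, y) : ℝ × ℝ) = x • ((1 : ℝ), (0 : ℝ)) + y • ((0 : ℝ), (1 : ℝ)) := by
      ext <;> simp
    rw [hv, map_add, map_smul, map_smul]
    simp only [ContinuousLinearMap.add_apply, ContinuousLinearMap.smul_apply, map_add,
      map_smul, smul_eq_mul]
    ring
  ----------------------------------------------------------------
  -- algebra
  set A11 := H ((1 : ℝ), (0 : ℝ)) ((1 : ℝ), (0 : ℝ)) with hA11
  set A12 := H ((1 : ℝ), (0 : ℝ)) ((0 : ℝ), (1 : ℝ)) with hA12
  set A21 := H ((0 : ℝ), (1 : ℝ)) ((1 : ℝ), (0 : ℝ)) with hA21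
  set A22 := H ((0 : ℝ), (1 : ℝ)) ((0 : ℝ), (1 : ℝ)) with hA22
  set a := Real.cos φ₀ with hadef
  set b := Real.sin φ₀ with hbdef
  set u0 := U φ₀ with hu0
  set u2 := deriv (deriv U) φ₀ with hu2
  set X := c ^ k with hX
  set Y := c ^ (k - 1) with hY
  set Z := c ^ (k - 1 - 1) with hZ
  have R1 : Y * c = X := by rw [hY, hX, ← Real.rpow_add_one hc.ne' (k - 1)]; ring_nf
  have R2 : Z * c = Y := by rw [hZ, hY, ← Real.rpow_add_one hc.ne' (k - 1 - 1)]; ring_nf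
  have E2 : a * a * A11 + a * b * A12 + b * a * A21 + b * b * A22
      = k * ((k - 1) * Z) * u0 := by rw [← hexp a b]; exact hB
  have hm : fderiv ℝ V p ((-(c * a), -(c * b))) = -(c * a) * (c * a) + -(c * b) * (c * b) :=
    hfp _
  have E3 : (-(c * b)) * (-(c * b)) * A11 + (-(c * b)) * (c * a) * A12
      + (c * a) * (-(c * b)) * A21 + (c * a) * (c * a) * A22
      = X * u2 + c ^ 2 := by
    have h := hCeq
    rw [hm, hexp (-(c * b)) (c * a)] at h
    linear_combination h + c ^ 2 * pyth
  have F1 : k * Y * u0 = c := hA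
  have F2 : a * a * A11 + a * b * A12 + b * a * A21 + b * b * A22 = k - 1 := by
    have h2 : k * ((k - 1) * Z) * u0 = k - 1 := by
      have h3 : (k * ((k - 1) * Z) * u0) * c = (k - 1) * c := by
        calc (k * ((k - 1) * Z) * u0) * c = (k - 1) * (k * (Z * c) * u0) := by ring
          _ = (k - 1) * (k * Y * u0) := by rw [R2]
          _ = (k - 1) * c := by rw [F1]
      exact mul_right_cancel₀ hc.ne' h3
    rw [E2, h2]
  have F5 : k * X * u0 = c ^ 2 := by
    calc k * X * u0 = (k * Y * u0) * c := by rw [← R1]; ring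
      _ = c * c := by rw [F1]
      _ = c ^ 2 := by ring
  have F4 : c ^ 2 * (A11 + A22) = c ^ 2 * (k - 1) + (X * u2 + c ^ 2) := by
    linear_combination (norm := ring_nf) c ^ 2 * F2 + E3 - c ^ 2 * (A11 + A22) * pyth
  have F6 : X * u2 = c ^ 2 * (u2 / (k * u0)) := by
    have hku : k * u0 ≠ 0 := mul_ne_zero hk hU0
    field_simp
    linear_combination u2 * F5
  rw [hd11, hd22]
  have hc2 : (c : ℝ) ^ 2 ≠ 0 := pow_ne_zero 2 hc.ne'
  have F7 : c ^ 2 * (A11 + A22) = c ^ 2 * ((k - 1) + 1 + u2 / (k * u0)) := by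
    rw [F4, F6]; ring
  have F8 : A11 + A22 = (k - 1) + 1 + u2 / (k * u0) := mul_left_cancel₀ hc2 F7
  rw [F8]; ring
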